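/- Let X_1, ..., X_n be {0,1}-valued k-wise independent random variables with Pr[X_i = 1] = p for every i. Let X = Σ_{i=1}^n X_i and μ = E[X] = np. Then Pr[X ≥ k] ≤ μ^k / k!. -/

import Mathlib

open MeasureTheory ProbabilityTheory

/-- A family of Boolean random variables is `k`-wise independent if any at most `k` of them
are mutually independent. -/
def KWiseIndep {Ω : Type*} [MeasurableSpace Ω] (P : Measure Ω) {n : ℕ} (k : ℕ)
    (X : Fin n → Ω → Bool) : Prop :=
  ∀ A : Finset (Fin n), A.card ≤ k →
    iIndepFun (m := fun _ : A => (inferInstance : MeasurableSpace Bool)) (fun i : A => X i) P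

/-- Let `X_1, …, X_n` be `{0,1}`-valued `k`-wise independent random
variables with `Pr[X_i = 1] = p`.  With `X = Σ X_i` and `μ = E[X] = np`, we have
`Pr[X ≥ k] ≤ μ^k / k!`. -/
theorem kwise_upper_tail {Ω : Type*} [MeasurableSpace Ω] (P : Measure Ω)
    [IsProbabilityMeasure P] {n : ℕ} (k : ℕ)
    (X : Fin n → Ω → Bool) (hX : ∀ i, Measurable (X i)) (p : ℝ)
    (hindep : KWiseIndep P k X)
    (hp : ∀ i, P {ω | X i ω = true} = ENNReal.ofReal p) :
    P {ω | (k : ℝ) ≤ ∑ i, (if X i ω then (1 : ℝ) else 0)}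
      ≤ ENNReal.ofReal (((n : ℝ) * p) ^ k / (Nat.factorial k)) := by
  classical
  rcases Nat.eq_zero_or_pos k with hk0 | hkpos
  · subst hk0
    simp only [pow_zero, Nat.factorial_zero, Nat.cast_one, div_one, ENNReal.ofReal_one]
    exact prob_le_one
  -- Step 1: covering by intersections over k-subsets
  have hcover : {ω | (k : ℝ) ≤ ∑ i, (if X i ω then (1 : ℝ) else 0)} ⊆
      ⋃ A ∈ (Finset.univ : Finset (Fin n)).powersetCard k, ⋂ i ∈ A, {ω | X i ω = true} := by
    intro ω hω
    have hsum : ∑ i, (if X i ω then (1 : ℝ) else 0)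
        = ((Finset.univ.filter (fun i => X i ω = true)).card : ℝ) := by
      rw [Finset.card_filter]
      push_cast
      refine Finset.sum_congr rfl fun i _ => ?_
      by_cases h : X i ω <;> simp [h]
    have hk : k ≤ (Finset.univ.filter (fun i => X i ω = true)).card := by
      have h := hω
      rw [Set.mem_setOf_eq, hsum] at h
      exact_mod_cast h
    obtain ⟨A, hAsub, hAcard⟩ := Finset.exists_subset_card_eq hk
    have hA : A ∈ (Finset.univ : Finset (Fin n)).powersetCard k :=
      Finset.mem_powersetCard.mpr ⟨Finset.subset_univ A, hAcard⟩
    refine Set.mem_biUnion hA ?_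
    · simp only [Set.mem_iInter]
      intro i hi
      have := hAsub hi
      simp only [Finset.mem_filter] at this
      exact this.2
  -- Step 2: each term equals (ofReal p)^k
  have hterm : ∀ A ∈ (Finset.univ : Finset (Fin n)).powersetCard k,
      P (⋂ i ∈ A, {ω | X i ω = true}) = (ENNReal.ofReal p) ^ k := by
    intro A hA
    have hcard : A.card = k := (Finset.mem_powersetCard.mp hA).2
    have hind := hindep A hcard.le
    have hset : (⋂ i ∈ A, {ω | X i ω = true}) = ⋂ i : A, (X i) ⁻¹' {true} := by
      ext ω; simp
    rw [hset]
    have := hind.meas_iInter (s := fun i : A => (X i) ⁻¹' {true})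
      (fun i => ⟨{true}, measurableSet_singleton true, rfl⟩)
    rw [this]
    have : ∀ i : A, P ((X i) ⁻¹' {true}) = ENNReal.ofReal p := by
      intro i
      have := hp i
      simpa [Set.preimage, Set.mem_setOf_eq] using this
    rw [Finset.prod_congr rfl (fun i _ => this i), Finset.prod_const,
      Finset.card_univ, Fintype.card_coe, hcard]
  -- Step 3: union bound
  have hbound : P {ω | (k : ℝ) ≤ ∑ i, (if X i ω then (1 : ℝ) else 0)}
      ≤ (n.choose k : ENNReal) * (ENNReal.ofReal p) ^ k := by
    calc P {ω | (k : ℝ) ≤ ∑ i, (if X i ω then (1 : ℝ) else 0)}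
        ≤ P (⋃ A ∈ (Finset.univ : Finset (Fin n)).powersetCard k,
            ⋂ i ∈ A, {ω | X i ω = true}) := measure_mono hcover
      _ ≤ ∑ A ∈ (Finset.univ : Finset (Fin n)).powersetCard k,
            P (⋂ i ∈ A, {ω | X i ω = true}) := measure_biUnion_finset_le _ _
      _ = ∑ A ∈ (Finset.univ : Finset (Fin n)).powersetCard k,
            (ENNReal.ofReal p) ^ k := Finset.sum_congr rfl hterm
      _ = (n.choose k : ENNReal) * (ENNReal.ofReal p) ^ k := by
            rw [Finset.sum_const, Finset.card_powersetCard, Finset.card_univ,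
              Fintype.card_fin, nsmul_eq_mul]
  refine hbound.trans ?_
  -- Step 4: arithmetic
  by_cases hp0 : 0 ≤ p
  · rw [← ENNReal.ofReal_pow hp0, ← ENNReal.ofReal_natCast,
      ← ENNReal.ofReal_mul (by positivity)]
    refine ENNReal.ofReal_le_ofReal ?_
    have h1 : (n.choose k : ℝ) ≤ (n : ℝ) ^ k / (Nat.factorial k) :=
      Nat.choose_le_pow_div k n
    calc (n.choose k : ℝ) * p ^ k
        ≤ ((n : ℝ) ^ k / (Nat.factorial k)) * p ^ k :=
          mul_le_mul_of_nonneg_right h1 (by positivity)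
      _ = ((n : ℝ) * p) ^ k / (Nat.factorial k) := by
          rw [mul_pow]; ring
  · push_neg at hp0
    rw [ENNReal.ofReal_eq_zero.mpr hp0.le, zero_pow hkpos.ne', mul_zero]
    exact zero_le
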